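/- arXiv:2508.21196 — 5 statements merged into one kernel-verified Lean document; each statement's English description precedes it below -/
import Mathlib

section
/- Let α and β be measurable spaces, and let ν be a probability measure on α × β which is absolutely continuous with respect to the product ν.fst ⊗ ν.snd of its two marginals, with Radon–Nikodym derivative bounded above by e^c for some constant c ≥ 0, (ν.fst ⊗ ν.snd)-almost everywhere. Then for every probability measure μ on α × β one has KL(μ‖ν) ≥ KL(μ.fst‖ν.fst) + KL(μ.snd‖ν.snd) − c (as an inequality in [0,∞] with the convention ∞ − c = ∞). -/
open MeasureTheory
open scoped ENNReal NNReal

open Classical in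
/-- The Kullback–Leibler divergence `KL(μ‖ν) ∈ [0,∞]`: it is `∫ log(dμ/dν) dμ` if `μ ≪ ν`
and the log-likelihood ratio is `μ`-integrable, and `+∞` otherwise. -/
noncomputable def klDiv {X : Type*} [MeasurableSpace X] (μ ν : Measure X) : ℝ≥0∞ :=
  if μ ≪ ν ∧ Integrable (fun x => Real.log ((μ.rnDeriv ν x).toReal)) μ
  then ENNReal.ofReal (∫ x, Real.log ((μ.rnDeriv ν x).toReal) ∂μ)
  else ⊤

namespace KLQuasiAux

open Real MeasureTheory Measure

variable {X : Type*} [MeasurableSpace X]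

/-- The negative part of the log-likelihood ratio is always integrable. -/
lemma integrable_min_llr_zero (ρ σ : Measure X) [IsFiniteMeasure ρ] [IsFiniteMeasure σ]
    (h : ρ ≪ σ) : Integrable (fun x => min (llr ρ σ x) 0) ρ := by
  refine ⟨((measurable_llr ρ σ).min measurable_const).aestronglyMeasurable, ?_⟩
  rw [hasFiniteIntegral_iff_norm]
  have hmeas : AEMeasurable (fun x => ENNReal.ofReal ‖min (llr ρ σ x) 0‖) σ :=
    (((measurable_llr ρ σ).min measurable_const).norm.ennreal_ofReal).aemeasurable
  rw [← lintegral_rnDeriv_mul h hmeas]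
  have hbd : ∀ᵐ x ∂σ, ρ.rnDeriv σ x * ENNReal.ofReal ‖min (llr ρ σ x) 0‖ ≤ 1 := by
    filter_upwards [Measure.rnDeriv_lt_top ρ σ] with x hx
    set t := ρ.rnDeriv σ x with ht
    set r := t.toReal with hr
    have hr0 : 0 ≤ r := ENNReal.toReal_nonneg
    have hllr : llr ρ σ x = Real.log r := rfl
    rcases le_or_gt 1 r with h1 | h1
    · have hmin : min (llr ρ σ x) 0 = 0 := by
        rw [hllr]; exact min_eq_right (Real.log_nonneg h1)
      simp [hmin]
    rcases eq_or_lt_of_le hr0 with h0 | h0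
    · have hmin : min (llr ρ σ x) 0 = 0 := by
        rw [hllr, ← h0]; simp
      simp [hmin]
    · have hlogneg : Real.log r ≤ 0 := Real.log_nonpos hr0 h1.le
      have hmin : min (llr ρ σ x) 0 = Real.log r := by
        rw [hllr]; exact min_eq_left hlogneg
      have habs : |Real.log r * r| < 1 := Real.abs_log_mul_self_lt r h0 h1.le
      have hnorm : ‖min (llr ρ σ x) 0‖ = -Real.log r := by
        rw [hmin, Real.norm_eq_abs, abs_of_nonpos hlogneg]
      have htr : t = ENNReal.ofReal r := (ENNReal.ofReal_toReal hx.ne).symm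
      rw [hnorm, htr, ← ENNReal.ofReal_mul hr0]
      rw [show (1 : ℝ≥0∞) = ENNReal.ofReal 1 by simp]
      refine ENNReal.ofReal_le_ofReal ?_
      have h2 := abs_lt.mp habs
      nlinarith [h2.1, h2.2]
  calc ∫⁻ x, ρ.rnDeriv σ x * ENNReal.ofReal ‖min (llr ρ σ x) 0‖ ∂σ
      ≤ ∫⁻ _, 1 ∂σ := lintegral_mono_ae hbd
    _ = σ Set.univ := by simp
    _ < ⊤ := measure_lt_top σ _

/-- Gibbs' inequality: the KL integral is nonnegative for probability measures. -/
lemma integral_llr_nonneg (ρ σ : Measure X) [IsProbabilityMeasure ρ] [IsProbabilityMeasure σ]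
    (h : ρ ≪ σ) (hint : Integrable (llr ρ σ) ρ) : 0 ≤ ∫ x, llr ρ σ x ∂ρ := by
  have hneg := neg_llr h
  have hInt2 : Integrable (llr σ ρ) ρ := hint.neg.congr hneg
  have hle : (llr σ ρ) ≤ᵐ[ρ] fun x => (σ.rnDeriv ρ x).toReal - 1 := by
    filter_upwards [Measure.rnDeriv_pos' h, Measure.rnDeriv_lt_top σ ρ] with x h0 hlt
    exact Real.log_le_sub_one_of_pos (ENNReal.toReal_pos h0.ne' hlt.ne)
  have hIntr : Integrable (fun x => (σ.rnDeriv ρ x).toReal - 1) ρ :=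
    Measure.integrable_toReal_rnDeriv.sub (integrable_const 1)
  have hmono := integral_mono_ae hInt2 hIntr hle
  have h2 : ∫ x, ((σ.rnDeriv ρ x).toReal - 1) ∂ρ ≤ 0 := by
    rw [integral_sub Measure.integrable_toReal_rnDeriv (integrable_const 1)]
    have hb : ∫ x, (σ.rnDeriv ρ x).toReal ∂ρ ≤ (σ Set.univ).toReal := by
      rw [← setIntegral_univ]
      exact Measure.setIntegral_toReal_rnDeriv_le (measure_ne_top σ _)
    simp only [integral_const, probReal_univ, measure_univ, ENNReal.toReal_one, smul_eq_mul, one_mul]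
    simp only [measure_univ, ENNReal.toReal_one] at hb
    linarith
  have h3 : ∫ x, llr σ ρ x ∂ρ = - ∫ x, llr ρ σ x ∂ρ := by
    rw [← integral_neg]; exact (integral_congr_ae hneg).symm
  linarith

/-- The Radon–Nikodym derivative of a product measure. -/
lemma rnDeriv_prod_ae {α β : Type*} [MeasurableSpace α] [MeasurableSpace β]
    {μ₁ ν₁ : Measure α} {μ₂ ν₂ : Measure β}
    [IsFiniteMeasure μ₁] [IsFiniteMeasure μ₂] [IsFiniteMeasure ν₁] [IsFiniteMeasure ν₂]
    (h1 : μ₁ ≪ ν₁) (h2 : μ₂ ≪ ν₂) :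
    (μ₁.prod μ₂).rnDeriv (ν₁.prod ν₂)
      =ᵐ[ν₁.prod ν₂] fun z => μ₁.rnDeriv ν₁ z.1 * μ₂.rnDeriv ν₂ z.2 := by
  have hF : Measurable fun z : α × β => μ₁.rnDeriv ν₁ z.1 * μ₂.rnDeriv ν₂ z.2 :=
    ((Measure.measurable_rnDeriv _ _).comp measurable_fst).mul
      ((Measure.measurable_rnDeriv _ _).comp measurable_snd)
  have hwd : μ₁.prod μ₂
      = (ν₁.prod ν₂).withDensity (fun z => μ₁.rnDeriv ν₁ z.1 * μ₂.rnDeriv ν₂ z.2) := by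
    refine Measure.prod_eq fun s t hs ht => ?_
    rw [withDensity_apply _ (hs.prod ht), ← Measure.prod_restrict,
      lintegral_prod_mul (Measure.measurable_rnDeriv _ _).aemeasurable
        (Measure.measurable_rnDeriv _ _).aemeasurable,
      Measure.setLIntegral_rnDeriv' h1 hs, Measure.setLIntegral_rnDeriv' h2 ht]
  rw [hwd]
  exact Measure.rnDeriv_withDensity₀ _ hF.aemeasurable

lemma ae_of_ae_fst {α β : Type*} [MeasurableSpace α] [MeasurableSpace β]
    (μ : Measure (α × β)) {p : α → Prop} (hp : MeasurableSet {x | p x})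
    (h : ∀ᵐ x ∂μ.fst, p x) : ∀ᵐ z ∂μ, p z.1 :=
  (ae_map_iff measurable_fst.aemeasurable hp).mp h

lemma ae_of_ae_snd {α β : Type*} [MeasurableSpace α] [MeasurableSpace β]
    (μ : Measure (α × β)) {p : β → Prop} (hp : MeasurableSet {x | p x})
    (h : ∀ᵐ x ∂μ.snd, p x) : ∀ᵐ z ∂μ, p z.2 :=
  (ae_map_iff measurable_snd.aemeasurable hp).mp h

end KLQuasiAux

open KLQuasiAux in
theorem quasi_superadditivity_of_KL
    {α β : Type*} [MeasurableSpace α] [MeasurableSpace β]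
    (ν : Measure (α × β)) [IsProbabilityMeasure ν]
    (c : ℝ) (hc : 0 ≤ c)
    (hac : ν ≪ ν.fst.prod ν.snd)
    (hbound : ∀ᵐ x ∂(ν.fst.prod ν.snd),
      ν.rnDeriv (ν.fst.prod ν.snd) x ≤ ENNReal.ofReal (Real.exp c)) :
    ∀ (μ : Measure (α × β)), IsProbabilityMeasure μ →
      klDiv μ.fst ν.fst + klDiv μ.snd ν.snd - ENNReal.ofReal c ≤ klDiv μ ν := by
  classical
  intro μ hμ
  by_cases hfin : μ ≪ ν ∧ Integrable (fun x => Real.log ((μ.rnDeriv ν x).toReal)) μ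
  swap
  · simp only [klDiv]
    rw [if_neg hfin]
    exact le_top
  obtain ⟨hμν, hint⟩ := hfin
  have hint' : Integrable (llr μ ν) μ := hint
  set L : Measure (α × β) := ν.fst.prod ν.snd with hLdef
  set P : Measure (α × β) := μ.fst.prod μ.snd with hPdef
  have hμL : μ ≪ L := hμν.trans hac
  -- marginal absolute continuity
  have h1 : μ.fst ≪ ν.fst := by
    refine Measure.AbsolutelyContinuous.mk fun s hs h0 => ?_
    rw [Measure.fst_apply hs]
    refine hμL ?_
    have hpre : Prod.fst ⁻¹' s = s ×ˢ (Set.univ : Set β) := by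
      ext z; simp
    rw [hpre, hLdef, Measure.prod_prod, h0, zero_mul]
  have h2 : μ.snd ≪ ν.snd := by
    refine Measure.AbsolutelyContinuous.mk fun s hs h0 => ?_
    rw [Measure.snd_apply hs]
    refine hμL ?_
    have hpre : Prod.snd ⁻¹' s = (Set.univ : Set α) ×ˢ s := by
      ext z; simp
    rw [hpre, hLdef, Measure.prod_prod, h0, mul_zero]
  -- a.e. positivity and finiteness of the marginal derivatives, pulled back to μ
  have hd1 : ∀ᵐ z ∂μ, 0 < μ.fst.rnDeriv ν.fst z.1 ∧ μ.fst.rnDeriv ν.fst z.1 < ⊤ := by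
    refine KLQuasiAux.ae_of_ae_fst μ
      (p := fun x => 0 < μ.fst.rnDeriv ν.fst x ∧ μ.fst.rnDeriv ν.fst x < ⊤) ?_ ?_
    · exact (Measure.measurable_rnDeriv μ.fst ν.fst) measurableSet_Ioo
    · filter_upwards [Measure.rnDeriv_pos h1, h1.ae_le (Measure.rnDeriv_lt_top μ.fst ν.fst)]
        with x hx hx' using ⟨hx, hx'⟩
  have hd2 : ∀ᵐ z ∂μ, 0 < μ.snd.rnDeriv ν.snd z.2 ∧ μ.snd.rnDeriv ν.snd z.2 < ⊤ := by
    refine KLQuasiAux.ae_of_ae_snd μ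
      (p := fun x => 0 < μ.snd.rnDeriv ν.snd x ∧ μ.snd.rnDeriv ν.snd x < ⊤) ?_ ?_
    · exact (Measure.measurable_rnDeriv μ.snd ν.snd) measurableSet_Ioo
    · filter_upwards [Measure.rnDeriv_pos h2, h2.ae_le (Measure.rnDeriv_lt_top μ.snd ν.snd)]
        with x hx hx' using ⟨hx, hx'⟩
  -- the ratio function
  set R : α × β → ℝ := fun z => (P.rnDeriv L z / μ.rnDeriv L z).toReal with hRdef
  have hRmeas : Measurable R :=
    ((Measure.measurable_rnDeriv P L).div (Measure.measurable_rnDeriv μ L)).ennreal_toReal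
  -- the central a.e. inequality
  have key : ∀ᵐ z ∂μ, llr μ.fst ν.fst z.1 + llr μ.snd ν.snd z.2
      ≤ llr μ ν z + c + (R z - 1) := by
    filter_upwards [hd1, hd2, hμL.ae_le (KLQuasiAux.rnDeriv_prod_ae h1 h2),
      Measure.rnDeriv_pos hμL, hμL.ae_le (Measure.rnDeriv_lt_top μ L),
      hμL.ae_le (Measure.rnDeriv_mul_rnDeriv hμν),
      Measure.rnDeriv_pos hμν, hμν.ae_le (Measure.rnDeriv_lt_top μ ν),
      hμL.ae_le hbound, hμν.ae_le (Measure.rnDeriv_pos hac),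
      hμL.ae_le (Measure.rnDeriv_lt_top ν L)]
      with z he1 he2 heF heqpos heqlt hechain hefpos heflt heH heHpos heHlt
    set p1 : ℝ := (μ.fst.rnDeriv ν.fst z.1).toReal
    set p2 : ℝ := (μ.snd.rnDeriv ν.snd z.2).toReal
    set a : ℝ := (μ.rnDeriv ν z).toReal
    set b : ℝ := (ν.rnDeriv L z).toReal
    set q : ℝ := (μ.rnDeriv L z).toReal
    set p : ℝ := (P.rnDeriv L z).toReal
    have hp1 : 0 < p1 := ENNReal.toReal_pos he1.1.ne' he1.2.ne
    have hp2 : 0 < p2 := ENNReal.toReal_pos he2.1.ne' he2.2.ne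
    have ha : 0 < a := ENNReal.toReal_pos hefpos.ne' heflt.ne
    have hb : 0 < b := ENNReal.toReal_pos heHpos.ne' heHlt.ne
    have hq : 0 < q := ENNReal.toReal_pos heqpos.ne' heqlt.ne
    have hp : p = p1 * p2 := by
      rw [show p = (P.rnDeriv L z).toReal from rfl, heF, ENNReal.toReal_mul]
    have hppos : 0 < p := by rw [hp]; positivity
    have hqab : q = a * b := by
      rw [show q = (μ.rnDeriv L z).toReal from rfl, ← hechain]
      exact ENNReal.toReal_mul
    have hbc : b ≤ Real.exp c :=
      ENNReal.toReal_le_of_le_ofReal (Real.exp_pos c).le heH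
    have hlogb : Real.log b ≤ c := by
      calc Real.log b ≤ Real.log (Real.exp c) := Real.log_le_log hb hbc
        _ = c := Real.log_exp c
    have hR : R z = p / q := by
      rw [hRdef]
      exact ENNReal.toReal_div _ _
    have hsum : llr μ.fst ν.fst z.1 + llr μ.snd ν.snd z.2 = Real.log p := by
      rw [hp, Real.log_mul hp1.ne' hp2.ne']; rfl
    have hlq : Real.log q = llr μ ν z + Real.log b := by
      rw [hqab, Real.log_mul ha.ne' hb.ne']; rfl
    have hjensen : Real.log p - Real.log q ≤ p / q - 1 := by
      rw [← Real.log_div hppos.ne' hq.ne']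
      exact Real.log_le_sub_one_of_pos (by positivity)
    rw [hsum, hR]
    have : Real.log p ≤ Real.log q + (p / q - 1) := by linarith
    calc Real.log p ≤ Real.log q + (p / q - 1) := this
      _ = llr μ ν z + Real.log b + (p / q - 1) := by rw [hlq]
      _ ≤ llr μ ν z + c + (p / q - 1) := by linarith
  -- Integrability of R and bound on its integral
  have hRfin : ∫⁻ z, P.rnDeriv L z / μ.rnDeriv L z ∂μ ≤ 1 := by
    rw [← lintegral_rnDeriv_mul hμL (f := fun z => P.rnDeriv L z / μ.rnDeriv L z)
      ((Measure.measurable_rnDeriv P L).div (Measure.measurable_rnDeriv μ L)).aemeasurable]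
    calc ∫⁻ z, μ.rnDeriv L z * (P.rnDeriv L z / μ.rnDeriv L z) ∂L
        ≤ ∫⁻ z, P.rnDeriv L z ∂L := lintegral_mono fun z => ENNReal.mul_div_le
      _ ≤ P Set.univ := Measure.lintegral_rnDeriv_le
      _ = 1 := measure_univ
  have hIntR : Integrable R μ := by
    refine ⟨hRmeas.aestronglyMeasurable, ?_⟩
    rw [hasFiniteIntegral_iff_norm]
    calc ∫⁻ z, ENNReal.ofReal ‖R z‖ ∂μ
        = ∫⁻ z, ENNReal.ofReal (R z) ∂μ := by
          congr 1; funext z; rw [Real.norm_of_nonneg ENNReal.toReal_nonneg]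
      _ ≤ ∫⁻ z, P.rnDeriv L z / μ.rnDeriv L z ∂μ :=
          lintegral_mono fun z => ENNReal.ofReal_toReal_le
      _ ≤ 1 := hRfin
      _ < ⊤ := ENNReal.one_lt_top
  have hIR : ∫ z, R z ∂μ ≤ 1 := by
    have h0 : 0 ≤ᵐ[μ] R := Filter.Eventually.of_forall fun z => ENNReal.toReal_nonneg
    have heq := MeasureTheory.ofReal_integral_eq_lintegral_ofReal hIntR h0
    have hle : ENNReal.ofReal (∫ z, R z ∂μ) ≤ 1 := by
      rw [heq]
      exact le_trans (lintegral_mono fun z => ENNReal.ofReal_toReal_le) hRfin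
    exact ENNReal.ofReal_le_one.mp hle
  -- names for the composed marginal llrs
  set A1 : α × β → ℝ := fun z => llr μ.fst ν.fst z.1 with hA1def
  set A2 : α × β → ℝ := fun z => llr μ.snd ν.snd z.2 with hA2def
  have hA1meas : StronglyMeasurable A1 :=
    ((measurable_llr _ _).comp measurable_fst).stronglyMeasurable
  have hA2meas : StronglyMeasurable A2 :=
    ((measurable_llr _ _).comp measurable_snd).stronglyMeasurable
  -- the upper bound function
  set U : α × β → ℝ := fun z => llr μ ν z + c + (R z - 1) with hUdef
  have hUint : Integrable U μ :=
    (hint'.add (integrable_const c)).add (hIntR.sub (integrable_const 1))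
  -- lower bounds: negative parts
  have hm1 : Integrable (fun z => min (A1 z) 0) μ := by
    have := KLQuasiAux.integrable_min_llr_zero μ.fst ν.fst h1
    have hmap : Integrable ((fun x => min (llr μ.fst ν.fst x) 0) ∘ Prod.fst) μ := by
      refine (integrable_map_measure ?_ measurable_fst.aemeasurable).mp this
      exact ((measurable_llr _ _).min measurable_const).aestronglyMeasurable
    exact hmap
  have hm2 : Integrable (fun z => min (A2 z) 0) μ := by
    have := KLQuasiAux.integrable_min_llr_zero μ.snd ν.snd h2
    have hmap : Integrable ((fun x => min (llr μ.snd ν.snd x) 0) ∘ Prod.snd) μ := by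
      refine (integrable_map_measure ?_ measurable_snd.aemeasurable).mp this
      exact ((measurable_llr _ _).min measurable_const).aestronglyMeasurable
    exact hmap
  -- integrability of A1 and A2
  have hA1int : Integrable A1 μ := by
    refine integrable_of_le_of_le hA1meas.aestronglyMeasurable
      (Filter.Eventually.of_forall fun z => min_le_left _ _) ?_ hm1 (hUint.sub hm2)
    filter_upwards [key] with z hz
    have hzU : A1 z + A2 z ≤ U z := hz
    simp only [Pi.sub_apply]
    have hmin : min (A2 z) 0 ≤ A2 z := min_le_left _ _
    linarith
  have hA2int : Integrable A2 μ := by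
    refine integrable_of_le_of_le hA2meas.aestronglyMeasurable
      (Filter.Eventually.of_forall fun z => min_le_left _ _) ?_ hm2 (hUint.sub hm1)
    filter_upwards [key] with z hz
    have hzU : A1 z + A2 z ≤ U z := hz
    simp only [Pi.sub_apply]
    have hmin : min (A1 z) 0 ≤ A1 z := min_le_left _ _
    linarith
  -- transfer to the marginals
  have hllr1 : Integrable (llr μ.fst ν.fst) μ.fst :=
    (integrable_map_measure (stronglyMeasurable_llr _ _).aestronglyMeasurable
      measurable_fst.aemeasurable).mpr hA1int
  have hllr2 : Integrable (llr μ.snd ν.snd) μ.snd :=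
    (integrable_map_measure (stronglyMeasurable_llr _ _).aestronglyMeasurable
      measurable_snd.aemeasurable).mpr hA2int
  have hi1 : ∫ x, llr μ.fst ν.fst x ∂μ.fst = ∫ z, A1 z ∂μ :=
    integral_map measurable_fst.aemeasurable
      (stronglyMeasurable_llr _ _).aestronglyMeasurable
  have hi2 : ∫ x, llr μ.snd ν.snd x ∂μ.snd = ∫ z, A2 z ∂μ :=
    integral_map measurable_snd.aemeasurable
      (stronglyMeasurable_llr _ _).aestronglyMeasurable
  -- the main integral inequality
  have hUval : ∫ z, U z ∂μ ≤ ∫ z, llr μ ν z ∂μ + c := by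
    have heqU : ∫ z, U z ∂μ
        = ∫ z, llr μ ν z ∂μ + c + (∫ z, R z ∂μ - 1) := by
      have hI1 : Integrable (fun z => llr μ ν z + c) μ := hint'.add (integrable_const c)
      have hI2 : Integrable (fun z => R z - 1) μ := hIntR.sub (integrable_const 1)
      have h0 : ∫ z, U z ∂μ = ∫ z, ((llr μ ν z + c) + (R z - 1)) ∂μ := rfl
      rw [h0, integral_add hI1 hI2, integral_add hint' (integrable_const c),
        integral_sub hIntR (integrable_const 1)]
      simp only [integral_const, probReal_univ, measure_univ, ENNReal.toReal_one, smul_eq_mul, one_mul]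
    rw [heqU]
    linarith
  have hsum : ∫ x, llr μ.fst ν.fst x ∂μ.fst + ∫ x, llr μ.snd ν.snd x ∂μ.snd
      ≤ ∫ z, llr μ ν z ∂μ + c := by
    rw [hi1, hi2, ← integral_add hA1int hA2int]
    exact le_trans (integral_mono_ae (hA1int.add hA2int) hUint key) hUval
  -- Gibbs' inequality for the marginals
  have hg1 : 0 ≤ ∫ x, llr μ.fst ν.fst x ∂μ.fst := KLQuasiAux.integral_llr_nonneg _ _ h1 hllr1
  have hg2 : 0 ≤ ∫ x, llr μ.snd ν.snd x ∂μ.snd := KLQuasiAux.integral_llr_nonneg _ _ h2 hllr2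
  -- conclude
  simp only [klDiv]
  rw [if_pos ⟨h1, hllr1⟩, if_pos ⟨h2, hllr2⟩, if_pos ⟨hμν, hint⟩, tsub_le_iff_right]
  calc ENNReal.ofReal (∫ x, Real.log ((μ.fst.rnDeriv ν.fst x).toReal) ∂μ.fst)
        + ENNReal.ofReal (∫ x, Real.log ((μ.snd.rnDeriv ν.snd x).toReal) ∂μ.snd)
      = ENNReal.ofReal (∫ x, llr μ.fst ν.fst x ∂μ.fst + ∫ x, llr μ.snd ν.snd x ∂μ.snd) :=
        (ENNReal.ofReal_add hg1 hg2).symm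
    _ ≤ ENNReal.ofReal (∫ z, llr μ ν z ∂μ + c) := ENNReal.ofReal_le_ofReal hsum
    _ ≤ ENNReal.ofReal (∫ z, llr μ ν z ∂μ) + ENNReal.ofReal c := ENNReal.ofReal_add_le
end

section
/- Let μ and ρ be probability measures on a measurable space X, let g : X → [0,∞) be measurable such that ν := ρ.withDensity g is a probability measure, and suppose g ≤ C holds ρ-almost everywhere for some constant C ≥ 1. Then KL(μ‖ν) ≥ KL(μ‖ρ) − log C (as an inequality in [0,∞]). -/
open MeasureTheory
open scoped ENNReal NNReal

/-- Real inequality: `r * max (-log r) 0 ≤ 1` for `0 ≤ r`. -/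
lemma aux_neg_log_mul_le {r : ℝ} (hr : 0 ≤ r) : r * max (-Real.log r) 0 ≤ 1 := by
  rcases eq_or_lt_of_le hr with h0 | h0
  · simp [← h0]
  rcases le_or_gt 1 r with h1 | h1
  · have : max (-Real.log r) 0 = 0 := max_eq_right (by simpa using Real.log_nonneg h1)
    simp [this]
  · have hlog : -Real.log r ≤ r⁻¹ - 1 := by
      have h := Real.log_le_sub_one_of_pos (inv_pos.mpr h0)
      rwa [Real.log_inv] at h
    have hmax : max (-Real.log r) 0 ≤ r⁻¹ - 1 := by
      refine max_le hlog ?_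
      rw [le_sub_iff_add_le, zero_add]
      exact (one_le_inv_iff₀.mpr ⟨h0, h1.le⟩)
    calc r * max (-Real.log r) 0 ≤ r * (r⁻¹ - 1) :=
          mul_le_mul_of_nonneg_left hmax hr
      _ = 1 - r := by field_simp
      _ ≤ 1 := by linarith

theorem KL_withDensity_bounded_ge
    {X : Type*} [MeasurableSpace X]
    (μ ρ : Measure X) [IsProbabilityMeasure μ] [IsProbabilityMeasure ρ]
    (g : X → ℝ≥0) (hg : Measurable g)
    (hν : IsProbabilityMeasure (ρ.withDensity (fun x => (g x : ℝ≥0∞))))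
    (C : ℝ) (hC : 1 ≤ C)
    (hbound : ∀ᵐ x ∂ρ, (g x : ℝ) ≤ C) :
    klDiv μ ρ - ENNReal.ofReal (Real.log C)
      ≤ klDiv μ (ρ.withDensity (fun x => (g x : ℝ≥0∞))) := by
  classical
  set gE : X → ℝ≥0∞ := fun x => (g x : ℝ≥0∞) with hgE
  have hgEm : Measurable gE := hg.coe_nnreal_ennreal
  set ν : Measure X := ρ.withDensity gE with hνdef
  have hνρ : ν ≪ ρ := withDensity_absolutelyContinuous ρ gE
  have hlogC : (0:ℝ) ≤ Real.log C := Real.log_nonneg hC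
  by_cases htop : klDiv μ ν = ⊤
  · rw [htop]; exact le_top
  set f : X → ℝ := fun x => Real.log ((μ.rnDeriv ν x).toReal) with hf
  set F : X → ℝ := fun x => Real.log ((μ.rnDeriv ρ x).toReal) with hF
  have hcond : μ ≪ ν ∧ Integrable f μ := by
    by_contra h
    rw [klDiv, if_neg h] at htop
    exact htop rfl
  obtain ⟨hac, hint⟩ := hcond
  have hμρ : μ ≪ ρ := hac.trans hνρ
  have hFm : Measurable F := (Measure.measurable_rnDeriv μ ρ).ennreal_toReal.log
  -- g is positive μ-a.e.
  have hν0 : ν {x | g x = 0} = 0 := by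
    have hs : MeasurableSet {x | g x = 0} := hg (measurableSet_singleton 0)
    rw [hνdef, withDensity_apply _ hs]
    rw [setLIntegral_congr_fun hs (fun x hx => by
      simp only [hgE]; simp [Set.mem_setOf_eq.mp hx] : Set.EqOn gE (fun _ => (0:ℝ≥0∞)) {x | g x = 0})]
    simp
  have hgpos : ∀ᵐ x ∂μ, g x ≠ 0 := by
    have := hac hν0
    rw [ae_iff]
    simpa using this
  -- key pointwise identity and bound
  have hkey : ∀ᵐ x ∂μ, F x = f x + Real.log (g x) ∧ F x ≤ f x + Real.log C := by
    filter_upwards [hμρ.ae_le (Measure.rnDeriv_mul_rnDeriv hac (κ := ρ)),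
      hμρ.ae_le (Measure.rnDeriv_withDensity ρ hgEm),
      Measure.rnDeriv_pos hac, hac.ae_le (Measure.rnDeriv_lt_top μ ν),
      hgpos, hμρ.ae_le hbound] with x h1 h2 h3 h4 h5 h6
    have hx : μ.rnDeriv ρ x = μ.rnDeriv ν x * gE x := by
      rw [← h1, Pi.mul_apply, h2]
    have hne : (μ.rnDeriv ν x).toReal ≠ 0 := by
      simp [ENNReal.toReal_eq_zero_iff, h3.ne', h4.ne]
    have hgne : ((g x : ℝ≥0∞)).toReal ≠ 0 := by simpa using h5
    have hEq : F x = f x + Real.log (g x) := by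
      simp only [hF, hf, hx, ENNReal.toReal_mul]
      rw [Real.log_mul hne hgne]
      simp [hgE]
    refine ⟨hEq, ?_⟩
    rw [hEq]
    have hgpos' : (0:ℝ) < (g x : ℝ) :=
      lt_of_le_of_ne (g x).coe_nonneg (by simpa [eq_comm] using h5)
    exact add_le_add_right (Real.log_le_log hgpos' h6) _
  -- integrability of the positive part of F
  have hintP : Integrable (fun x => max (F x) 0) μ := by
    refine Integrable.mono' (hint.abs.add (integrable_const (Real.log C)))
      (hFm.max measurable_const).aestronglyMeasurable ?_
    filter_upwards [hkey] with x hx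
    obtain ⟨_, hle⟩ := hx
    rw [Real.norm_eq_abs, abs_of_nonneg (le_max_right _ _)]
    simp only [Pi.add_apply]
    exact max_le (hle.trans (add_le_add_left (le_abs_self _) _))
      (add_nonneg (abs_nonneg _) hlogC)
  -- integrability of the negative part of F
  have hintN : Integrable (fun x => max (-F x) 0) μ := by
    refine ⟨(hFm.neg.max measurable_const).aestronglyMeasurable, ?_⟩
    refine (hasFiniteIntegral_iff_ofReal (ae_of_all _ fun x => le_max_right _ _)).mpr ?_
    have hμw : μ = ρ.withDensity (μ.rnDeriv ρ) := (Measure.withDensity_rnDeriv_eq μ ρ hμρ).symm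
    calc ∫⁻ x, ENNReal.ofReal (max (-F x) 0) ∂μ
        = ∫⁻ x, μ.rnDeriv ρ x * ENNReal.ofReal (max (-F x) 0) ∂ρ := by
          nth_rw 1 [hμw]
          rw [lintegral_withDensity_eq_lintegral_mul _ (Measure.measurable_rnDeriv μ ρ)
            (g := fun x => ENNReal.ofReal (max (-F x) 0))
            ((hFm.neg.max measurable_const).ennreal_ofReal)]
          simp only [Pi.mul_apply]
      _ ≤ ∫⁻ _, 1 ∂ρ := by
          refine lintegral_mono_ae ?_
          filter_upwards [Measure.rnDeriv_lt_top μ ρ] with x hx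
          have hrd : μ.rnDeriv ρ x = ENNReal.ofReal ((μ.rnDeriv ρ x).toReal) :=
            (ENNReal.ofReal_toReal hx.ne).symm
          rw [hrd, ← ENNReal.ofReal_mul ENNReal.toReal_nonneg]
          calc ENNReal.ofReal ((μ.rnDeriv ρ x).toReal * max (-F x) 0)
              ≤ ENNReal.ofReal 1 :=
                ENNReal.ofReal_le_ofReal (aux_neg_log_mul_le ENNReal.toReal_nonneg)
            _ = 1 := ENNReal.ofReal_one
      _ < ⊤ := by simp
  have hintF : Integrable F μ :=
    (hintP.sub hintN).congr (Filter.Eventually.of_forall fun x =>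
      max_zero_sub_max_neg_zero_eq_self (F x))
  have hKρ : klDiv μ ρ = ENNReal.ofReal (∫ x, F x ∂μ) := by
    rw [klDiv, if_pos ⟨hμρ, hintF⟩]
  have hKν : klDiv μ ν = ENNReal.ofReal (∫ x, f x ∂μ) := by
    rw [klDiv, if_pos ⟨hac, hint⟩]
  rw [hKρ, hKν, ← ENNReal.ofReal_sub _ hlogC]
  refine ENNReal.ofReal_le_ofReal ?_
  rw [sub_le_iff_le_add]
  have hle : ∫ x, F x ∂μ ≤ ∫ x, (f x + Real.log C) ∂μ := by
    refine integral_mono_ae hintF (hint.add (integrable_const _)) ?_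
    filter_upwards [hkey] with x hx
    exact hx.2
  rw [integral_add hint (integrable_const _)] at hle
  simpa using hle
end

section
/- Let α and β be measurable spaces, let μ be a probability measure on α × β, and let ρ₁, ρ₂ be probability measures on α and β respectively. If KL(μ‖ρ₁ ⊗ ρ₂) < ∞, then KL(μ‖ρ₁ ⊗ ρ₂) = KL(μ.fst‖ρ₁) + KL(μ.snd‖ρ₂) + KL(μ‖μ.fst ⊗ μ.snd), where all terms on the right-hand side are finite. -/
open MeasureTheory
open scoped ENNReal NNReal

section Aux

/-- Pointwise bound `a * ‖min (log a.toReal) 0‖₊ ≤ 2`. -/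
lemma KL_aux_pt_bound (a : ℝ≥0∞) :
    a * (‖min (Real.log a.toReal) 0‖₊ : ℝ≥0∞) ≤ 2 := by
  rcases eq_or_ne a ⊤ with rfl | ha
  · simp
  rcases eq_or_ne a 0 with rfl | h0
  · simp
  set t := a.toReal with ht
  have htpos : 0 < t := ENNReal.toReal_pos h0 ha
  rcases le_or_gt 1 t with h1 | h1
  · have : min (Real.log t) 0 = 0 := min_eq_right (Real.log_nonneg h1)
    rw [this]; simp
  · have hlog : Real.log t < 0 := Real.log_neg htpos h1
    have hmin : min (Real.log t) 0 = Real.log t := min_eq_left hlog.le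
    rw [hmin]
    have ha' : a = ENNReal.ofReal t := (ENNReal.ofReal_toReal ha).symm
    have hnorm : (‖Real.log t‖₊ : ℝ≥0∞) = ENNReal.ofReal (-(Real.log t)) := by
      rw [← enorm_eq_nnnorm, Real.enorm_eq_ofReal_abs, abs_of_neg hlog]
    rw [ha', hnorm, ← ENNReal.ofReal_mul htpos.le]
    have hsq : 0 < Real.sqrt t := Real.sqrt_pos.mpr htpos
    have hls : Real.log (Real.sqrt t) = Real.log t / 2 := Real.log_sqrt htpos.le
    have hineq : Real.log (Real.sqrt t)⁻¹ ≤ (Real.sqrt t)⁻¹ - 1 :=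
      Real.log_le_sub_one_of_pos (by positivity)
    rw [Real.log_inv] at hineq
    have h2 : -(Real.log t) ≤ 2 * (Real.sqrt t)⁻¹ := by
      rw [hls] at hineq; nlinarith [hsq]
    have h3 : t * (-(Real.log t)) ≤ 2 * Real.sqrt t := by
      have := mul_le_mul_of_nonneg_left h2 htpos.le
      have hts : t * (Real.sqrt t)⁻¹ = Real.sqrt t := by
        rw [← Real.sqrt_mul_self htpos.le]
        field_simp
        rw [Real.sq_sqrt (Real.sqrt_nonneg _)]
      nlinarith [hts, hsq]
    have h4 : Real.sqrt t ≤ 1 := by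
      rw [show (1:ℝ) = Real.sqrt 1 by simp]
      exact Real.sqrt_le_sqrt h1.le
    calc ENNReal.ofReal (t * -(Real.log t)) ≤ ENNReal.ofReal 2 := by
          apply ENNReal.ofReal_le_ofReal; nlinarith
      _ = 2 := by norm_num

lemma KL_aux_pt_bound_inv (a : ℝ≥0∞) :
    a * (‖(a.toReal)⁻¹‖₊ : ℝ≥0∞) ≤ 1 := by
  rcases eq_or_ne a ⊤ with rfl | ha
  · simp
  rcases eq_or_ne a 0 with rfl | h0
  · simp
  have htpos : 0 < a.toReal := ENNReal.toReal_pos h0 ha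
  have ha' : a = ENNReal.ofReal a.toReal := (ENNReal.ofReal_toReal ha).symm
  have hnorm : ((‖(a.toReal)⁻¹‖₊ : ℝ≥0∞)) = ENNReal.ofReal (a.toReal)⁻¹ := by
    rw [← enorm_eq_nnnorm, Real.enorm_eq_ofReal_abs, abs_of_pos (by positivity)]
  rw [hnorm]
  nth_rewrite 1 [ha']
  rw [← ENNReal.ofReal_mul htpos.le, mul_inv_cancel₀ htpos.ne']
  simp

variable {X : Type*} [MeasurableSpace X] (μ ρ : Measure X)
  [IsProbabilityMeasure μ] [IsProbabilityMeasure ρ]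

lemma KL_aux_lint_wd {f : X → ℝ≥0∞} (hf : Measurable f) (h : μ ≪ ρ) :
    ∫⁻ x, f x ∂μ = ∫⁻ x, μ.rnDeriv ρ x * f x ∂ρ := by
  nth_rewrite 1 [← Measure.withDensity_rnDeriv_eq μ ρ h]
  rw [lintegral_withDensity_eq_lintegral_mul ρ (Measure.measurable_rnDeriv μ ρ) hf]
  rfl

lemma KL_aux_integrable_min_log (h : μ ≪ ρ) :
    Integrable (fun x => min (Real.log ((μ.rnDeriv ρ x).toReal)) 0) μ := by
  have hm : Measurable (fun x => min (Real.log ((μ.rnDeriv ρ x).toReal)) 0) :=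
    ((Measure.measurable_rnDeriv μ ρ).ennreal_toReal.log).min measurable_const
  refine ⟨hm.aestronglyMeasurable, ?_⟩
  rw [HasFiniteIntegral, KL_aux_lint_wd μ ρ (hm.enorm) h]
  calc ∫⁻ x, μ.rnDeriv ρ x * (‖min (Real.log ((μ.rnDeriv ρ x).toReal)) 0‖₊ : ℝ≥0∞) ∂ρ
      ≤ ∫⁻ _, 2 ∂ρ := lintegral_mono fun x => KL_aux_pt_bound _
    _ < ⊤ := by simp

lemma KL_aux_integrable_inv_rn (h : μ ≪ ρ) :
    Integrable (fun x => ((μ.rnDeriv ρ x).toReal)⁻¹) μ := by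
  have hm : Measurable (fun x => ((μ.rnDeriv ρ x).toReal)⁻¹) :=
    (Measure.measurable_rnDeriv μ ρ).ennreal_toReal.inv
  refine ⟨hm.aestronglyMeasurable, ?_⟩
  rw [HasFiniteIntegral, KL_aux_lint_wd μ ρ (hm.enorm) h]
  calc ∫⁻ x, μ.rnDeriv ρ x * (‖((μ.rnDeriv ρ x).toReal)⁻¹‖₊ : ℝ≥0∞) ∂ρ
      ≤ ∫⁻ _, 1 ∂ρ := lintegral_mono fun x => KL_aux_pt_bound_inv _
    _ < ⊤ := by simp

lemma KL_aux_integral_inv_le (h : μ ≪ ρ) :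
    ∫ x, ((μ.rnDeriv ρ x).toReal)⁻¹ ∂μ ≤ 1 := by
  have hm : Measurable (fun x => ((μ.rnDeriv ρ x).toReal)⁻¹) :=
    (Measure.measurable_rnDeriv μ ρ).ennreal_toReal.inv
  have hnn : 0 ≤ᵐ[μ] fun x => ((μ.rnDeriv ρ x).toReal)⁻¹ :=
    Filter.Eventually.of_forall fun x => by positivity
  rw [integral_eq_lintegral_of_nonneg_ae hnn hm.aestronglyMeasurable]
  have hb : ∫⁻ x, ENNReal.ofReal ((μ.rnDeriv ρ x).toReal)⁻¹ ∂μ ≤ 1 := by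
    rw [KL_aux_lint_wd μ ρ (by exact hm.ennreal_ofReal) h]
    calc ∫⁻ x, μ.rnDeriv ρ x * ENNReal.ofReal ((μ.rnDeriv ρ x).toReal)⁻¹ ∂ρ
        ≤ ∫⁻ _, 1 ∂ρ := by
          refine lintegral_mono fun x => ?_
          have := KL_aux_pt_bound_inv (μ.rnDeriv ρ x)
          rwa [← enorm_eq_nnnorm, Real.enorm_eq_ofReal_abs,
            abs_of_nonneg (by positivity)] at this
      _ = 1 := by simp
  calc (∫⁻ x, ENNReal.ofReal ((μ.rnDeriv ρ x).toReal)⁻¹ ∂μ).toReal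
      ≤ (1 : ℝ≥0∞).toReal := ENNReal.toReal_mono (by simp) hb
    _ = 1 := by simp

/-- Gibbs' inequality: the KL integrand has nonnegative integral. -/
lemma KL_aux_integral_log_nonneg (h : μ ≪ ρ)
    (hi : Integrable (fun x => Real.log ((μ.rnDeriv ρ x).toReal)) μ) :
    0 ≤ ∫ x, Real.log ((μ.rnDeriv ρ x).toReal) ∂μ := by
  have hinv := KL_aux_integrable_inv_rn μ ρ h
  have hae : ∀ᵐ x ∂μ, -(Real.log ((μ.rnDeriv ρ x).toReal))
      ≤ ((μ.rnDeriv ρ x).toReal)⁻¹ - 1 := by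
    filter_upwards [Measure.rnDeriv_pos h, h.ae_le (Measure.rnDeriv_lt_top μ ρ)] with x hpos hlt
    have ht : 0 < (μ.rnDeriv ρ x).toReal := ENNReal.toReal_pos hpos.ne' hlt.ne
    have := Real.log_le_sub_one_of_pos (inv_pos.mpr ht)
    rwa [Real.log_inv] at this
  have h1 : ∫ x, -(Real.log ((μ.rnDeriv ρ x).toReal)) ∂μ
      ≤ ∫ x, (((μ.rnDeriv ρ x).toReal)⁻¹ - 1) ∂μ :=
    integral_mono_ae hi.neg (hinv.sub (integrable_const 1)) hae
  rw [integral_neg] at h1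
  rw [integral_sub hinv (integrable_const 1)] at h1
  simp only [integral_const, probReal_univ, smul_eq_mul, one_mul] at h1
  have h2 := KL_aux_integral_inv_le μ ρ h
  linarith

variable {α β : Type*} [MeasurableSpace α] [MeasurableSpace β]

lemma KL_aux_prod_withDensity_rnDeriv (μ₁ : Measure α) (μ₂ : Measure β)
    (ρ₁ : Measure α) (ρ₂ : Measure β)
    [IsProbabilityMeasure μ₁] [IsProbabilityMeasure μ₂]
    [IsProbabilityMeasure ρ₁] [IsProbabilityMeasure ρ₂]
    (h₁ : μ₁ ≪ ρ₁) (h₂ : μ₂ ≪ ρ₂) :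
    μ₁.prod μ₂ = (ρ₁.prod ρ₂).withDensity
      (fun z => μ₁.rnDeriv ρ₁ z.1 * μ₂.rnDeriv ρ₂ z.2) := by
  have hg₁ := Measure.measurable_rnDeriv μ₁ ρ₁
  have hg₂ := Measure.measurable_rnDeriv μ₂ ρ₂
  refine Measure.prod_eq fun s t hs ht => ?_
  rw [withDensity_apply _ (hs.prod ht), ← Measure.prod_restrict,
    lintegral_prod_mul hg₁.aemeasurable hg₂.aemeasurable]
  rw [← withDensity_apply _ hs, ← withDensity_apply _ ht,
    Measure.withDensity_rnDeriv_eq _ _ h₁, Measure.withDensity_rnDeriv_eq _ _ h₂]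

lemma KL_aux_fst_ac (μ : Measure (α × β)) (ρ₁ : Measure α) (ρ₂ : Measure β)
    [IsProbabilityMeasure μ] [IsProbabilityMeasure ρ₁] [IsProbabilityMeasure ρ₂]
    (h : μ ≪ ρ₁.prod ρ₂) : μ.fst ≪ ρ₁ := by
  have := h.map (f := Prod.fst) measurable_fst
  rwa [show (ρ₁.prod ρ₂).map Prod.fst = (ρ₁.prod ρ₂).fst from rfl, Measure.fst_prod] at this

lemma KL_aux_snd_ac (μ : Measure (α × β)) (ρ₁ : Measure α) (ρ₂ : Measure β)
    [IsProbabilityMeasure μ] [IsProbabilityMeasure ρ₁] [IsProbabilityMeasure ρ₂]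
    (h : μ ≪ ρ₁.prod ρ₂) : μ.snd ≪ ρ₂ := by
  have := h.map (f := Prod.snd) measurable_snd
  rwa [show (ρ₁.prod ρ₂).map Prod.snd = (ρ₁.prod ρ₂).snd from rfl, Measure.snd_prod] at this

lemma KL_aux_ae_fst (μ : Measure (α × β)) {p : α → Prop}
    (h : ∀ᵐ x ∂μ.fst, p x) : ∀ᵐ z ∂μ, p z.1 :=
  MeasureTheory.ae_of_ae_map measurable_fst.aemeasurable h

lemma KL_aux_ae_snd (μ : Measure (α × β)) {p : β → Prop}
    (h : ∀ᵐ x ∂μ.snd, p x) : ∀ᵐ z ∂μ, p z.2 :=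
  MeasureTheory.ae_of_ae_map measurable_snd.aemeasurable h

lemma KL_aux_ac_prod_marginals (μ : Measure (α × β)) (ρ₁ : Measure α) (ρ₂ : Measure β)
    [IsProbabilityMeasure μ] [IsProbabilityMeasure ρ₁] [IsProbabilityMeasure ρ₂]
    (h : μ ≪ ρ₁.prod ρ₂) : μ ≪ μ.fst.prod μ.snd := by
  have h₁ := KL_aux_fst_ac μ ρ₁ ρ₂ h
  have h₂ := KL_aux_snd_ac μ ρ₁ ρ₂ h
  set g₁ := μ.fst.rnDeriv ρ₁
  set g₂ := μ.snd.rnDeriv ρ₂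
  have hprod := KL_aux_prod_withDensity_rnDeriv μ.fst μ.snd ρ₁ ρ₂ h₁ h₂
  intro E hE0
  rw [hprod] at hE0
  have hg₁ := Measure.measurable_rnDeriv μ.fst ρ₁
  have hg₂ := Measure.measurable_rnDeriv μ.snd ρ₂
  have hG : Measurable (fun z : α × β => g₁ z.1 * g₂ z.2) :=
    (hg₁.comp measurable_fst).mul (hg₂.comp measurable_snd)
  have hnull : μ ({z | g₁ z.1 * g₂ z.2 ≠ 0} ∩ E) = 0 :=
    h ((withDensity_apply_eq_zero' hG.aemeasurable).mp hE0)
  have hpos : μ {z | g₁ z.1 * g₂ z.2 = 0} = 0 := by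
    have h1 := KL_aux_ae_fst μ (Measure.rnDeriv_pos h₁)
    have h2 := KL_aux_ae_snd μ (Measure.rnDeriv_pos h₂)
    have : ∀ᵐ z ∂μ, ¬ (g₁ z.1 * g₂ z.2 = 0) := by
      filter_upwards [h1, h2] with z hz1 hz2
      exact mul_ne_zero hz1.ne' hz2.ne'
    have := ae_iff.mp this
    simpa only [not_not] using this
  refine measure_mono_null (fun z hz => ?_) (measure_union_null hnull hpos)
  by_cases hzg : g₁ z.1 * g₂ z.2 = 0
  · exact Or.inr hzg
  · exact Or.inl ⟨hzg, hz⟩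

end Aux

theorem KL_tensorization
    {α β : Type*} [MeasurableSpace α] [MeasurableSpace β]
    (μ : Measure (α × β)) [IsProbabilityMeasure μ]
    (ρ₁ : Measure α) (ρ₂ : Measure β)
    [IsProbabilityMeasure ρ₁] [IsProbabilityMeasure ρ₂]
    (hfin : klDiv μ (ρ₁.prod ρ₂) < ⊤) :
    klDiv μ (ρ₁.prod ρ₂)
        = klDiv μ.fst ρ₁ + klDiv μ.snd ρ₂ + klDiv μ (μ.fst.prod μ.snd)
      ∧ klDiv μ.fst ρ₁ ≠ ⊤ ∧ klDiv μ.snd ρ₂ ≠ ⊤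
      ∧ klDiv μ (μ.fst.prod μ.snd) ≠ ⊤ := by
  classical
  set ν := ρ₁.prod ρ₂ with hν
  by_cases hc : μ ≪ ν ∧ Integrable (fun x => Real.log ((μ.rnDeriv ν x).toReal)) μ
  swap
  · rw [klDiv, if_neg hc] at hfin; exact absurd hfin (lt_irrefl ⊤)
  obtain ⟨hac, hint⟩ := hc
  have h₁ : μ.fst ≪ ρ₁ := KL_aux_fst_ac μ ρ₁ ρ₂ hac
  have h₂ : μ.snd ≪ ρ₂ := KL_aux_snd_ac μ ρ₁ ρ₂ hac
  set π := μ.fst.prod μ.snd with hπ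
  have hμπ : μ ≪ π := KL_aux_ac_prod_marginals μ ρ₁ ρ₂ hac
  set g₁ := μ.fst.rnDeriv ρ₁ with hg₁def
  set g₂ := μ.snd.rnDeriv ρ₂ with hg₂def
  have hg₁ := Measure.measurable_rnDeriv μ.fst ρ₁
  have hg₂ := Measure.measurable_rnDeriv μ.snd ρ₂
  have hG : Measurable (fun z : α × β => g₁ z.1 * g₂ z.2) :=
    (hg₁.comp measurable_fst).mul (hg₂.comp measurable_snd)
  have hprod : π = ν.withDensity (fun z => g₁ z.1 * g₂ z.2) :=
    KL_aux_prod_withDensity_rnDeriv μ.fst μ.snd ρ₁ ρ₂ h₁ h₂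
  -- the three log terms
  set a : α × β → ℝ := fun z => Real.log ((g₁ z.1).toReal) with hadef
  set b : α × β → ℝ := fun z => Real.log ((g₂ z.2).toReal) with hbdef
  set c : α × β → ℝ := fun z => Real.log ((μ.rnDeriv π z).toReal) with hcdef
  set L : α × β → ℝ := fun z => Real.log ((μ.rnDeriv ν z).toReal) with hLdef
  have hma : Measurable a := (hg₁.comp measurable_fst).ennreal_toReal.log
  have hmb : Measurable b := (hg₂.comp measurable_snd).ennreal_toReal.log
  have hmc : Measurable c := (Measure.measurable_rnDeriv μ π).ennreal_toReal.log
  -- a.e. decomposition L = a + b + c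
  have hGd : π.rnDeriv ν =ᵐ[ν] fun z => g₁ z.1 * g₂ z.2 := by
    have := Measure.rnDeriv_withDensity ν hG
    rw [← hprod] at this
    exact this
  have hchain : μ.rnDeriv π * π.rnDeriv ν =ᵐ[ν] μ.rnDeriv ν :=
    Measure.rnDeriv_mul_rnDeriv hμπ
  have hdecomp : ∀ᵐ z ∂μ, L z = a z + b z + c z := by
    filter_upwards [hac.ae_le hchain, hac.ae_le hGd, Measure.rnDeriv_pos hμπ,
      hμπ.ae_le (Measure.rnDeriv_lt_top μ π),
      KL_aux_ae_fst μ (Measure.rnDeriv_pos h₁),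
      KL_aux_ae_fst μ (h₁.ae_le (Measure.rnDeriv_lt_top μ.fst ρ₁)),
      KL_aux_ae_snd μ (Measure.rnDeriv_pos h₂),
      KL_aux_ae_snd μ (h₂.ae_le (Measure.rnDeriv_lt_top μ.snd ρ₂))] with z
        e1 e2 hcp hcf h1p h1f h2p h2f
    have hcz : 0 < (μ.rnDeriv π z).toReal := ENNReal.toReal_pos hcp.ne' hcf.ne
    have h1z : 0 < (g₁ z.1).toReal := ENNReal.toReal_pos h1p.ne' h1f.ne
    have h2z : 0 < (g₂ z.2).toReal := ENNReal.toReal_pos h2p.ne' h2f.ne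
    have he : μ.rnDeriv ν z = μ.rnDeriv π z * (g₁ z.1 * g₂ z.2) := by
      rw [← e1, Pi.mul_apply, e2]
    simp only [hLdef, hadef, hbdef, hcdef]
    rw [he, ENNReal.toReal_mul, ENNReal.toReal_mul,
      Real.log_mul (by positivity) (by positivity), Real.log_mul h1z.ne' h2z.ne']
    ring
  -- negative parts are integrable
  have hminaf : Integrable (fun x => min (Real.log ((g₁ x).toReal)) 0) μ.fst :=
    KL_aux_integrable_min_log μ.fst ρ₁ h₁
  have hminbf : Integrable (fun x => min (Real.log ((g₂ x).toReal)) 0) μ.snd :=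
    KL_aux_integrable_min_log μ.snd ρ₂ h₂
  have hfst_eq : μ.fst = μ.map Prod.fst := rfl
  have hsnd_eq : μ.snd = μ.map Prod.snd := rfl
  have hmina : Integrable (fun z => min (a z) 0) μ := by
    rw [hfst_eq] at hminaf
    exact (integrable_map_measure
      (((hg₁.ennreal_toReal.log).min measurable_const).aestronglyMeasurable)
      measurable_fst.aemeasurable).mp hminaf
  have hminb : Integrable (fun z => min (b z) 0) μ := by
    rw [hsnd_eq] at hminbf
    exact (integrable_map_measure
      (((hg₂.ennreal_toReal.log).min measurable_const).aestronglyMeasurable)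
      measurable_snd.aemeasurable).mp hminbf
  have hminc : Integrable (fun z => min (c z) 0) μ :=
    KL_aux_integrable_min_log μ π hμπ
  -- dominating function for the positive parts
  have hD : Integrable
      (fun z => |L z| - min (a z) 0 - min (b z) 0 - min (c z) 0) μ :=
    ((hint.abs.sub hmina).sub hminb).sub hminc
  have key : ∀ f : (α × β) → ℝ, Measurable f →
      (∀ᵐ z ∂μ, max (f z) 0 ≤ |L z| - min (a z) 0 - min (b z) 0 - min (c z) 0) →
      Integrable (fun z => max (f z) 0) μ := by
    intro f hf hb
    refine Integrable.mono' hD ((hf.max measurable_const).aestronglyMeasurable) ?_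
    filter_upwards [hb] with z hz
    rw [Real.norm_eq_abs, abs_of_nonneg (le_max_right _ _)]
    exact hz
  have hbnd : ∀ᵐ z ∂μ,
      max (a z) 0 ≤ |L z| - min (a z) 0 - min (b z) 0 - min (c z) 0 ∧
      max (b z) 0 ≤ |L z| - min (a z) 0 - min (b z) 0 - min (c z) 0 ∧
      max (c z) 0 ≤ |L z| - min (a z) 0 - min (b z) 0 - min (c z) 0 := by
    filter_upwards [hdecomp] with z hz
    have hma' : max (a z) 0 + min (a z) 0 = a z + 0 := max_add_min _ _
    have hmb' : max (b z) 0 + min (b z) 0 = b z + 0 := max_add_min _ _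
    have hmc' : max (c z) 0 + min (c z) 0 = c z + 0 := max_add_min _ _
    have hL : L z ≤ |L z| := le_abs_self _
    have hnL : -(L z) ≤ |L z| := neg_le_abs _
    have h1 : min (a z) 0 ≤ a z := min_le_left _ _
    have h2 : min (b z) 0 ≤ b z := min_le_left _ _
    have h3 : min (c z) 0 ≤ c z := min_le_left _ _
    refine ⟨?_, ?_, ?_⟩ <;> nlinarith [hz]
  have hposa := key a hma ((hbnd.mono) fun z hz => hz.1)
  have hposb := key b hmb ((hbnd.mono) fun z hz => hz.2.1)
  have hposc := key c hmc ((hbnd.mono) fun z hz => hz.2.2)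
  have ha_int : Integrable a μ := by
    have : a = fun z => max (a z) 0 + min (a z) 0 := by
      funext z; rw [max_add_min, add_zero]
    rw [this]; exact hposa.add hmina
  have hb_int : Integrable b μ := by
    have : b = fun z => max (b z) 0 + min (b z) 0 := by
      funext z; rw [max_add_min, add_zero]
    rw [this]; exact hposb.add hminb
  have hc_int : Integrable c μ := by
    have : c = fun z => max (c z) 0 + min (c z) 0 := by
      funext z; rw [max_add_min, add_zero]
    rw [this]; exact hposc.add hminc
  -- transfer to the marginals
  have ha_fst : Integrable (fun x => Real.log ((g₁ x).toReal)) μ.fst := by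
    rw [hfst_eq]
    exact (integrable_map_measure
      ((hg₁.ennreal_toReal.log).aestronglyMeasurable)
      measurable_fst.aemeasurable).mpr ha_int
  have hb_snd : Integrable (fun x => Real.log ((g₂ x).toReal)) μ.snd := by
    rw [hsnd_eq]
    exact (integrable_map_measure
      ((hg₂.ennreal_toReal.log).aestronglyMeasurable)
      measurable_snd.aemeasurable).mpr hb_int
  have hIa : ∫ z, a z ∂μ = ∫ x, Real.log ((g₁ x).toReal) ∂μ.fst := by
    rw [hfst_eq, integral_map measurable_fst.aemeasurable
      ((hg₁.ennreal_toReal.log).aestronglyMeasurable)]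
  have hIb : ∫ z, b z ∂μ = ∫ x, Real.log ((g₂ x).toReal) ∂μ.snd := by
    rw [hsnd_eq, integral_map measurable_snd.aemeasurable
      ((hg₂.ennreal_toReal.log).aestronglyMeasurable)]
  -- integral decomposition
  have hab : Integrable (fun z => a z + b z) μ := ha_int.add hb_int
  have hI : ∫ z, L z ∂μ = ∫ z, a z ∂μ + ∫ z, b z ∂μ + ∫ z, c z ∂μ := by
    have t1 : ∫ z, (a z + b z + c z) ∂μ
        = ∫ z, (a z + b z) ∂μ + ∫ z, c z ∂μ := integral_add hab hc_int
    have t2 : ∫ z, (a z + b z) ∂μ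
        = ∫ z, a z ∂μ + ∫ z, b z ∂μ := integral_add ha_int hb_int
    calc ∫ z, L z ∂μ = ∫ z, (a z + b z + c z) ∂μ := integral_congr_ae hdecomp
      _ = ∫ z, a z ∂μ + ∫ z, b z ∂μ + ∫ z, c z ∂μ := by rw [t1, t2]
  -- nonnegativity of the three terms
  have hnn_a : 0 ≤ ∫ x, Real.log ((g₁ x).toReal) ∂μ.fst :=
    KL_aux_integral_log_nonneg μ.fst ρ₁ h₁ ha_fst
  have hnn_b : 0 ≤ ∫ x, Real.log ((g₂ x).toReal) ∂μ.snd :=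
    KL_aux_integral_log_nonneg μ.snd ρ₂ h₂ hb_snd
  have hnn_c : 0 ≤ ∫ z, c z ∂μ :=
    KL_aux_integral_log_nonneg μ π hμπ hc_int
  -- assemble
  have e0 : klDiv μ ν = ENNReal.ofReal (∫ z, L z ∂μ) := by
    rw [klDiv, if_pos ⟨hac, hint⟩]
  have e1 : klDiv μ.fst ρ₁ = ENNReal.ofReal (∫ x, Real.log ((g₁ x).toReal) ∂μ.fst) := by
    rw [klDiv, if_pos ⟨h₁, ha_fst⟩]
  have e2 : klDiv μ.snd ρ₂ = ENNReal.ofReal (∫ x, Real.log ((g₂ x).toReal) ∂μ.snd) := by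
    rw [klDiv, if_pos ⟨h₂, hb_snd⟩]
  have e3 : klDiv μ π = ENNReal.ofReal (∫ z, c z ∂μ) := by
    rw [klDiv, if_pos ⟨hμπ, hc_int⟩]
  refine ⟨?_, by rw [e1]; exact ENNReal.ofReal_ne_top,
    by rw [e2]; exact ENNReal.ofReal_ne_top,
    by rw [e3]; exact ENNReal.ofReal_ne_top⟩
  rw [e0, e1, e2, e3, hI, hIa, hIb,
    ENNReal.ofReal_add (add_nonneg hnn_a hnn_b) hnn_c,
    ENNReal.ofReal_add hnn_a hnn_b]
end

section
/- Let α and β be measurable spaces, let μ be a probability measure on α × β, and let ρ₁, ρ₂ be probability measures on α and β respectively. Then KL(μ‖ρ₁ ⊗ ρ₂) ≥ KL(μ.fst‖ρ₁) + KL(μ.snd‖ρ₂) (as an inequality in [0,∞]). -/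
open MeasureTheory
open scoped ENNReal NNReal

section Aux

lemma aux_mul_max_neg_log_le_one {t : ℝ} (ht : 0 ≤ t) : t * max (-Real.log t) 0 ≤ 1 := by
  rcases ht.eq_or_lt with h | h
  · simp [← h]
  rcases le_total (Real.log t) 0 with hl | hl
  · rw [max_eq_left (neg_nonneg.2 hl)]
    have h2 : Real.log t⁻¹ ≤ t⁻¹ - 1 := Real.log_le_sub_one_of_pos (inv_pos.2 h)
    rw [Real.log_inv] at h2
    have htinv : t * t⁻¹ = 1 := mul_inv_cancel₀ h.ne'
    nlinarith [mul_le_mul_of_nonneg_left h2 ht]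
  · rw [max_eq_right (neg_nonpos.2 hl)]
    simp

lemma aux_sub_one_le_mul_log {t : ℝ} (ht : 0 ≤ t) : t - 1 ≤ t * Real.log t := by
  rcases ht.eq_or_lt with h | h
  · simp [← h]
  have h2 : Real.log t⁻¹ ≤ t⁻¹ - 1 := Real.log_le_sub_one_of_pos (inv_pos.2 h)
  rw [Real.log_inv] at h2
  have htinv : t * t⁻¹ = 1 := mul_inv_cancel₀ h.ne'
  nlinarith [mul_le_mul_of_nonneg_left h2 ht]

variable {X : Type*} [MeasurableSpace X]

lemma integrable_max_neg_log_rnDeriv (μ ν : Measure X) [IsProbabilityMeasure μ]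
    [IsProbabilityMeasure ν] (hμν : μ ≪ ν) :
    Integrable (fun x => max (-Real.log ((μ.rnDeriv ν x).toReal)) 0) μ := by
  have hmeas : Measurable fun x => max (-Real.log ((μ.rnDeriv ν x).toReal)) 0 :=
    ((Real.measurable_log.comp (Measure.measurable_rnDeriv μ ν).ennreal_toReal).neg).max
      measurable_const
  refine ⟨hmeas.aestronglyMeasurable,
    (hasFiniteIntegral_iff_ofReal
      (f := fun x => max (-Real.log ((μ.rnDeriv ν x).toReal)) 0)
      (Filter.Eventually.of_forall fun x => le_max_right _ _)).2 ?_⟩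
  have heq : ∫⁻ x, ENNReal.ofReal (max (-Real.log ((μ.rnDeriv ν x).toReal)) 0) ∂μ
      = ∫⁻ x, μ.rnDeriv ν x * ENNReal.ofReal (max (-Real.log ((μ.rnDeriv ν x).toReal)) 0) ∂ν :=
    (lintegral_rnDeriv_mul hμν
      (ENNReal.measurable_ofReal.comp hmeas).aemeasurable).symm
  rw [heq]
  have hle : ∫⁻ x, μ.rnDeriv ν x * ENNReal.ofReal (max (-Real.log ((μ.rnDeriv ν x).toReal)) 0) ∂ν
      ≤ ∫⁻ _, 1 ∂ν := by
    refine lintegral_mono_ae ?_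
    filter_upwards [Measure.rnDeriv_lt_top μ ν] with x hx
    have ht : (0:ℝ) ≤ (μ.rnDeriv ν x).toReal := ENNReal.toReal_nonneg
    have hxx : μ.rnDeriv ν x = ENNReal.ofReal ((μ.rnDeriv ν x).toReal) :=
      (ENNReal.ofReal_toReal hx.ne).symm
    nth_rewrite 1 [hxx]
    rw [← ENNReal.ofReal_mul ht]
    exact ENNReal.ofReal_le_one.2 (aux_mul_max_neg_log_le_one ht)
  refine lt_of_le_of_lt hle ?_
  simp

lemma integral_log_rnDeriv_nonneg (μ ν : Measure X) [IsProbabilityMeasure μ]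
    [IsProbabilityMeasure ν] (hμν : μ ≪ ν)
    (h : Integrable (fun x => Real.log ((μ.rnDeriv ν x).toReal)) μ) :
    0 ≤ ∫ x, Real.log ((μ.rnDeriv ν x).toReal) ∂μ := by
  rw [← integral_rnDeriv_smul hμν]
  have hint : Integrable
      (fun x => (μ.rnDeriv ν x).toReal • Real.log ((μ.rnDeriv ν x).toReal)) ν :=
    (integrable_rnDeriv_smul_iff hμν).2 h
  have hint2 : Integrable (fun x => (μ.rnDeriv ν x).toReal - 1) ν :=
    Measure.integrable_toReal_rnDeriv.sub (integrable_const 1)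
  have hpt : (fun x => (μ.rnDeriv ν x).toReal - 1)
      ≤ fun x => (μ.rnDeriv ν x).toReal • Real.log ((μ.rnDeriv ν x).toReal) := by
    intro x
    simpa [smul_eq_mul] using aux_sub_one_le_mul_log
      (ENNReal.toReal_nonneg (a := μ.rnDeriv ν x))
  have hmono := integral_mono hint2 hint hpt
  have hzero : ∫ x, ((μ.rnDeriv ν x).toReal - 1) ∂ν = 0 := by
    rw [integral_sub Measure.integrable_toReal_rnDeriv (integrable_const 1),
      Measure.integral_toReal_rnDeriv hμν]
    simp
  rw [hzero] at hmono
  exact hmono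

end Aux

theorem KL_superadditive_prod
    {α β : Type*} [MeasurableSpace α] [MeasurableSpace β]
    (μ : Measure (α × β)) [IsProbabilityMeasure μ]
    (ρ₁ : Measure α) (ρ₂ : Measure β)
    [IsProbabilityMeasure ρ₁] [IsProbabilityMeasure ρ₂] :
    klDiv μ.fst ρ₁ + klDiv μ.snd ρ₂ ≤ klDiv μ (ρ₁.prod ρ₂) := by
  classical
  set ν := ρ₁.prod ρ₂ with hν
  by_cases hc : μ ≪ ν ∧ Integrable (fun x => Real.log ((μ.rnDeriv ν x).toReal)) μ
  swap
  · simp only [klDiv]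
    rw [if_neg hc]
    exact le_top
  obtain ⟨hac, hF⟩ := hc
  set m := μ.fst.prod μ.snd with hm
  set g₁ := μ.fst.rnDeriv ρ₁ with hg₁
  set g₂ := μ.snd.rnDeriv ρ₂ with hg₂
  have hmg₁ : Measurable g₁ := Measure.measurable_rnDeriv _ _
  have hmg₂ : Measurable g₂ := Measure.measurable_rnDeriv _ _
  have hmgp : Measurable fun p : α × β => g₁ p.1 * g₂ p.2 :=
    (hmg₁.comp measurable_fst).mul (hmg₂.comp measurable_snd)
  have h1 : μ.fst ≪ ρ₁ := by
    have h := hac.map (measurable_fst (α := α) (β := β))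
    have h2 : ν.fst = ρ₁ := Measure.fst_prod
    exact h2 ▸ h
  have h2 : μ.snd ≪ ρ₂ := by
    have h := hac.map (measurable_snd (α := α) (β := β))
    have h2 : ν.snd = ρ₂ := Measure.snd_prod
    exact h2 ▸ h
  have hm_eq : m = ν.withDensity fun p => g₁ p.1 * g₂ p.2 := by
    show μ.fst.prod μ.snd = ν.withDensity fun p => g₁ p.1 * g₂ p.2
    refine Measure.prod_eq fun s t hs ht => ?_
    rw [withDensity_apply _ (hs.prod ht), ← Measure.prod_restrict,
      lintegral_prod_mul hmg₁.aemeasurable hmg₂.aemeasurable,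
      Measure.setLIntegral_rnDeriv h1, Measure.setLIntegral_rnDeriv h2]
  have hm_rn : m.rnDeriv ν =ᵐ[ν] fun p => g₁ p.1 * g₂ p.2 := by
    rw [hm_eq]; exact Measure.rnDeriv_withDensity ν hmgp
  -- a.e. positivity / finiteness of marginal densities
  have hg₁pos : ∀ᵐ p ∂μ, 0 < g₁ p.1 :=
    (ae_map_iff measurable_fst.aemeasurable
      (measurableSet_lt measurable_const hmg₁)).1 (Measure.rnDeriv_pos h1)
  have hg₂pos : ∀ᵐ p ∂μ, 0 < g₂ p.2 :=
    (ae_map_iff measurable_snd.aemeasurable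
      (measurableSet_lt measurable_const hmg₂)).1 (Measure.rnDeriv_pos h2)
  have hg₁lt : ∀ᵐ p ∂μ, g₁ p.1 < ⊤ :=
    (ae_map_iff measurable_fst.aemeasurable
      (measurableSet_lt hmg₁ measurable_const)).1
      ((Measure.rnDeriv_lt_top μ.fst ρ₁).filter_mono h1.ae_le)
  have hg₂lt : ∀ᵐ p ∂μ, g₂ p.2 < ⊤ :=
    (ae_map_iff measurable_snd.aemeasurable
      (measurableSet_lt hmg₂ measurable_const)).1
      ((Measure.rnDeriv_lt_top μ.snd ρ₂).filter_mono h2.ae_le)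
  -- μ ≪ m
  have hμm : μ ≪ m := by
    refine Measure.AbsolutelyContinuous.mk fun A hA hA0 => ?_
    rw [hm_eq, withDensity_apply _ hA, lintegral_eq_zero_iff hmgp] at hA0
    have hA0' : ∀ᵐ p ∂ν, p ∈ A → g₁ p.1 * g₂ p.2 = 0 := (ae_restrict_iff' hA).1 hA0
    have hν0 : ν (A ∩ {p | g₁ p.1 * g₂ p.2 ≠ 0}) = 0 := by
      refine measure_mono_null (fun p hp => ?_) (ae_iff.1 hA0')
      intro hcontra
      exact hp.2 (hcontra hp.1)
    have hμ0 : μ (A ∩ {p | g₁ p.1 * g₂ p.2 ≠ 0}) = 0 := hac hν0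
    have hz : μ {p | g₁ p.1 * g₂ p.2 = 0} = 0 := by
      have hae : ∀ᵐ p ∂μ, g₁ p.1 * g₂ p.2 ≠ 0 := by
        filter_upwards [hg₁pos, hg₂pos] with p hp1 hp2
        exact mul_ne_zero hp1.ne' hp2.ne'
      refine measure_mono_null (fun p hp => ?_) (ae_iff.1 hae)
      exact not_not_intro hp
    have hsub : A ⊆ (A ∩ {p | g₁ p.1 * g₂ p.2 ≠ 0}) ∪ {p | g₁ p.1 * g₂ p.2 = 0} := by
      intro p hp
      by_cases hzero : g₁ p.1 * g₂ p.2 = 0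
      · exact Or.inr hzero
      · exact Or.inl ⟨hp, hzero⟩
    have : μ A ≤ 0 := by
      calc μ A ≤ μ ((A ∩ {p | g₁ p.1 * g₂ p.2 ≠ 0}) ∪ {p | g₁ p.1 * g₂ p.2 = 0}) :=
            measure_mono hsub
        _ ≤ μ (A ∩ {p | g₁ p.1 * g₂ p.2 ≠ 0}) + μ {p | g₁ p.1 * g₂ p.2 = 0} :=
            measure_union_le _ _
        _ = 0 := by rw [hμ0, hz, add_zero]
    exact le_antisymm this zero_le
  have hchain : μ.rnDeriv m * m.rnDeriv ν =ᵐ[ν] μ.rnDeriv ν :=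
    Measure.rnDeriv_mul_rnDeriv hμm
  set F := fun p : α × β => Real.log ((μ.rnDeriv ν p).toReal) with hF_def
  set H := fun p : α × β => Real.log ((μ.rnDeriv m p).toReal) with hH_def
  set G₁ := fun p : α × β => Real.log ((g₁ p.1).toReal) with hG₁_def
  set G₂ := fun p : α × β => Real.log ((g₂ p.2).toReal) with hG₂_def
  have hdecomp : ∀ᵐ p ∂μ, F p = H p + G₁ p + G₂ p := by
    filter_upwards [hchain.filter_mono hac.ae_le, hm_rn.filter_mono hac.ae_le,
      hg₁pos, hg₂pos, hg₁lt, hg₂lt,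
      Measure.rnDeriv_pos hμm, (Measure.rnDeriv_lt_top μ m).filter_mono hμm.ae_le]
      with p e1 e2 p1 p2 l1 l2 ph lh
    have hmul : μ.rnDeriv ν p = μ.rnDeriv m p * (g₁ p.1 * g₂ p.2) := by
      rw [← e1, Pi.mul_apply, e2]
    have ht : (μ.rnDeriv ν p).toReal
        = (μ.rnDeriv m p).toReal * ((g₁ p.1).toReal * (g₂ p.2).toReal) := by
      rw [hmul, ENNReal.toReal_mul, ENNReal.toReal_mul]
    have hh0 : (μ.rnDeriv m p).toReal ≠ 0 := (ENNReal.toReal_pos ph.ne' lh.ne).ne'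
    have h10 : (g₁ p.1).toReal ≠ 0 := (ENNReal.toReal_pos p1.ne' l1.ne).ne'
    have h20 : (g₂ p.2).toReal ≠ 0 := (ENNReal.toReal_pos p2.ne' l2.ne).ne'
    simp only [hF_def, hH_def, hG₁_def, hG₂_def]
    rw [ht, Real.log_mul hh0 (mul_ne_zero h10 h20), Real.log_mul h10 h20]
    ring
  -- negative parts are integrable
  have hnegH : Integrable (fun p => max (-H p) 0) μ :=
    integrable_max_neg_log_rnDeriv μ m hμm
  have hnegG₁' : Integrable (fun x => max (-Real.log ((g₁ x).toReal)) 0) μ.fst :=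
    integrable_max_neg_log_rnDeriv μ.fst ρ₁ h1
  have hnegG₂' : Integrable (fun x => max (-Real.log ((g₂ x).toReal)) 0) μ.snd :=
    integrable_max_neg_log_rnDeriv μ.snd ρ₂ h2
  have hmeasLog₁ : Measurable fun x : α => Real.log ((g₁ x).toReal) :=
    Real.measurable_log.comp hmg₁.ennreal_toReal
  have hmeasLog₂ : Measurable fun y : β => Real.log ((g₂ y).toReal) :=
    Real.measurable_log.comp hmg₂.ennreal_toReal
  have hnegG₁ : Integrable (fun p : α × β => max (-G₁ p) 0) μ :=
    (integrable_map_measure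
      (((hmeasLog₁.neg).max measurable_const).aestronglyMeasurable)
      measurable_fst.aemeasurable).1 hnegG₁'
  have hnegG₂ : Integrable (fun p : α × β => max (-G₂ p) 0) μ :=
    (integrable_map_measure
      (((hmeasLog₂.neg).max measurable_const).aestronglyMeasurable)
      measurable_snd.aemeasurable).1 hnegG₂'
  -- integrability of the pieces
  have hbound : Integrable
      (fun p => |F p| + (max (-H p) 0 + (max (-G₁ p) 0 + max (-G₂ p) 0))) μ :=
    hF.abs.add (hnegH.add (hnegG₁.add hnegG₂))
  have hintG₁ : Integrable G₁ μ := by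
    refine hbound.mono' ((hmeasLog₁.comp measurable_fst).aestronglyMeasurable) ?_
    filter_upwards [hdecomp] with p hp
    rw [Real.norm_eq_abs, abs_le]
    have hFa : F p ≤ |F p| := le_abs_self _
    have hFa' : -|F p| ≤ F p := neg_abs_le _
    have hH1 : -H p ≤ max (-H p) 0 := le_max_left _ _
    have hH2 : (0:ℝ) ≤ max (-H p) 0 := le_max_right _ _
    have hg11 : -G₁ p ≤ max (-G₁ p) 0 := le_max_left _ _
    have hg12 : (0:ℝ) ≤ max (-G₁ p) 0 := le_max_right _ _
    have hg21 : -G₂ p ≤ max (-G₂ p) 0 := le_max_left _ _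
    have hg22 : (0:ℝ) ≤ max (-G₂ p) 0 := le_max_right _ _
    have habs : (0:ℝ) ≤ |F p| := abs_nonneg _
    constructor <;> linarith
  have hintG₂ : Integrable G₂ μ := by
    refine hbound.mono' ((hmeasLog₂.comp measurable_snd).aestronglyMeasurable) ?_
    filter_upwards [hdecomp] with p hp
    rw [Real.norm_eq_abs, abs_le]
    have hFa : F p ≤ |F p| := le_abs_self _
    have hH1 : -H p ≤ max (-H p) 0 := le_max_left _ _
    have hH2 : (0:ℝ) ≤ max (-H p) 0 := le_max_right _ _
    have hg11 : -G₁ p ≤ max (-G₁ p) 0 := le_max_left _ _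
    have hg12 : (0:ℝ) ≤ max (-G₁ p) 0 := le_max_right _ _
    have hg21 : -G₂ p ≤ max (-G₂ p) 0 := le_max_left _ _
    have hg22 : (0:ℝ) ≤ max (-G₂ p) 0 := le_max_right _ _
    have habs : (0:ℝ) ≤ |F p| := abs_nonneg _
    constructor <;> linarith
  have hintH : Integrable H μ := by
    refine ((hF.sub hintG₁).sub hintG₂).congr ?_
    filter_upwards [hdecomp] with p hp
    simp only [Pi.sub_apply]
    linarith
  -- integral identities
  have hintG₁' : Integrable (fun x => Real.log ((g₁ x).toReal)) μ.fst :=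
    (integrable_map_measure hmeasLog₁.aestronglyMeasurable
      measurable_fst.aemeasurable).2 hintG₁
  have hintG₂' : Integrable (fun y => Real.log ((g₂ y).toReal)) μ.snd :=
    (integrable_map_measure hmeasLog₂.aestronglyMeasurable
      measurable_snd.aemeasurable).2 hintG₂
  have hG₁map : ∫ x, Real.log ((g₁ x).toReal) ∂μ.fst = ∫ p, G₁ p ∂μ :=
    integral_map measurable_fst.aemeasurable hmeasLog₁.aestronglyMeasurable
  have hG₂map : ∫ y, Real.log ((g₂ y).toReal) ∂μ.snd = ∫ p, G₂ p ∂μ :=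
    integral_map measurable_snd.aemeasurable hmeasLog₂.aestronglyMeasurable
  have hIH : 0 ≤ ∫ p, H p ∂μ := integral_log_rnDeriv_nonneg μ m hμm hintH
  have hI1 : 0 ≤ ∫ x, Real.log ((g₁ x).toReal) ∂μ.fst :=
    integral_log_rnDeriv_nonneg μ.fst ρ₁ h1 hintG₁'
  have hI2 : 0 ≤ ∫ y, Real.log ((g₂ y).toReal) ∂μ.snd :=
    integral_log_rnDeriv_nonneg μ.snd ρ₂ h2 hintG₂'
  have hsum : ∫ p, F p ∂μ = (∫ p, H p ∂μ) + (∫ p, G₁ p ∂μ) + ∫ p, G₂ p ∂μ := by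
    have e1 : ∫ p, (H p + G₁ p) + G₂ p ∂μ = (∫ p, H p + G₁ p ∂μ) + ∫ p, G₂ p ∂μ :=
      integral_add (hintH.add hintG₁) hintG₂
    have e2 : ∫ p, H p + G₁ p ∂μ = (∫ p, H p ∂μ) + ∫ p, G₁ p ∂μ :=
      integral_add hintH hintG₁
    rw [integral_congr_ae hdecomp, e1, e2]
  simp only [klDiv]
  rw [if_pos ⟨h1, hintG₁'⟩, if_pos ⟨h2, hintG₂'⟩, if_pos ⟨hac, hF⟩]
  rw [← ENNReal.ofReal_add hI1 hI2]
  refine ENNReal.ofReal_le_ofReal ?_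
  rw [hG₁map, hG₂map]
  linarith
end

section
/- Let E be a nonempty finite type, let Q be an E × E real matrix with Q(x,y) ≥ 0 for all x ≠ y and ∑_y Q(x,y) = 0 for all x, and assume Q is irreducible in the sense that for every t > 0 all entries of the matrix exponential exp(t·Q) are strictly positive. Let μ : E → ℝ be a strictly positive probability vector which is stationary for Q, i.e., ∑_x μ(x)·Q(x,y) = 0 for all y, and let ν : E → ℝ be a probability vector. Define ν_t(x) = ∑_y ν(y)·(exp(t·Q))(y,x) and h(t) = ∑_x ν_t(x)·log(ν_t(x)/μ(x)) (with 0·log 0 = 0). If h(t) = h(0) for all t ≥ 0, then ν = μ. -/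
open scoped Matrix

lemma exp_mulVec_fixed {E : Type*} [Fintype E] [DecidableEq E]
    (A : Matrix E E ℝ) (v : E → ℝ) (hv : A *ᵥ v = 0) :
    (NormedSpace.exp A) *ᵥ v = v := by
  letI : NormedRing (Matrix E E ℝ) := Matrix.linftyOpNormedRing
  letI : NormedAlgebra ℝ (Matrix E E ℝ) := Matrix.linftyOpNormedAlgebra
  have hsum : Summable (fun n : ℕ => ((n.factorial : ℝ))⁻¹ • A ^ n) :=
    NormedSpace.expSeries_summable' A
  let L : Matrix E E ℝ →ₗ[ℝ] (E → ℝ) :=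
    { toFun := fun M => M *ᵥ v
      map_add' := fun M N => Matrix.add_mulVec M N v
      map_smul' := fun c M => Matrix.smul_mulVec c M v }
  let L' : Matrix E E ℝ →L[ℝ] (E → ℝ) := ⟨L, L.continuous_of_finiteDimensional⟩
  have hpow : ∀ n : ℕ, A ^ (n + 1) *ᵥ v = 0 := by
    intro n
    induction n with
    | zero => simpa using hv
    | succ n ih =>
      rw [pow_succ, ← Matrix.mulVec_mulVec]
      rw [hv]
      simp
  have : (NormedSpace.exp A) *ᵥ v = L' (NormedSpace.exp A) := rfl
  rw [this, NormedSpace.exp_eq_tsum ℝ, L'.map_tsum hsum]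
  rw [tsum_eq_single 0]
  · show ((((0:ℕ).factorial : ℝ))⁻¹ • A ^ 0) *ᵥ v = v
    simp [Matrix.one_mulVec]
  · intro n hn
    obtain ⟨m, rfl⟩ := Nat.exists_eq_succ_of_ne_zero hn
    show ((((m+1:ℕ).factorial : ℝ))⁻¹ • A ^ (m+1)) *ᵥ v = 0
    rw [Matrix.smul_mulVec, hpow]
    simp

/-- Strict Lyapunov property of the relative entropy for finite-state irreducible
continuous-time Markov chains: if the relative entropy is constant in time, then the
initial distribution is the stationary one. -/
theorem relative_entropy_constant_implies_stationary
    {E : Type*} [Fintype E] [DecidableEq E] [Nonempty E]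
    (Q : Matrix E E ℝ)
    (hQoff : ∀ x y, x ≠ y → 0 ≤ Q x y)
    (hQrow : ∀ x, ∑ y, Q x y = 0)
    (hirr : ∀ t : ℝ, 0 < t → ∀ x y, 0 < (NormedSpace.exp (t • Q)) x y)
    (μ : E → ℝ) (hμpos : ∀ x, 0 < μ x) (hμsum : ∑ x, μ x = 1)
    (hstat : ∀ y, ∑ x, μ x * Q x y = 0)
    (ν : E → ℝ) (hνnonneg : ∀ x, 0 ≤ ν x) (hνsum : ∑ x, ν x = 1)
    (hconst : ∀ t : ℝ, 0 ≤ t →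
      (∑ x, (∑ y, ν y * (NormedSpace.exp (t • Q)) y x) *
          Real.log ((∑ y, ν y * (NormedSpace.exp (t • Q)) y x) / μ x))
        = (∑ x, (∑ y, ν y * (NormedSpace.exp ((0 : ℝ) • Q)) y x) *
          Real.log ((∑ y, ν y * (NormedSpace.exp ((0 : ℝ) • Q)) y x) / μ x))) :
    ν = μ := by
  classical
  set P : Matrix E E ℝ := NormedSpace.exp ((1:ℝ) • Q) with hP
  have hPpos : ∀ x y, 0 < P x y := hirr 1 one_pos
  -- rows of P sum to 1
  have hrow1 : ((1:ℝ) • Q) *ᵥ (fun _ => (1:ℝ)) = 0 := by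
    funext x
    simp only [one_smul, Matrix.mulVec, dotProduct, mul_one]
    exact hQrow x
  have hProw : ∀ x, ∑ y, P x y = 1 := by
    intro x
    have := congrFun (exp_mulVec_fixed ((1:ℝ) • Q) (fun _ => 1) hrow1) x
    simp only [hP]
    simpa [Matrix.mulVec, dotProduct, mul_one] using this
  -- μ is stationary for P
  have hstatv : (((1:ℝ) • Q)ᵀ) *ᵥ μ = 0 := by
    funext y
    simp only [one_smul, Matrix.mulVec, dotProduct, Matrix.transpose_apply]
    calc ∑ x, Q x y * μ x = ∑ x, μ x * Q x y := by
          exact Finset.sum_congr rfl fun x _ => mul_comm _ _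
      _ = 0 := hstat y
  have hμP : ∀ x, ∑ y, μ y * P y x = μ x := by
    intro x
    have h1 : (NormedSpace.exp (((1:ℝ) • Q)ᵀ)) *ᵥ μ = μ :=
      exp_mulVec_fixed _ μ hstatv
    have h2 : (NormedSpace.exp (((1:ℝ) • Q)ᵀ)) = Pᵀ := by
      letI : NormedRing (Matrix E E ℝ) := Matrix.linftyOpNormedRing
      letI : NormedAlgebra ℝ (Matrix E E ℝ) := Matrix.linftyOpNormedAlgebra
      exact Matrix.exp_transpose ((1:ℝ) • Q)
    rw [h2] at h1
    have := congrFun h1 x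
    simp only [Matrix.mulVec, dotProduct, Matrix.transpose_apply] at this
    calc ∑ y, μ y * P y x = ∑ y, P y x * μ y :=
          Finset.sum_congr rfl fun y _ => mul_comm _ _
      _ = μ x := this
  -- rewrite the entropy equality at t = 1
  set f : E → ℝ := fun x => ∑ y, ν y * P y x with hf
  have h0 : (∑ x, (∑ y, ν y * (NormedSpace.exp ((0 : ℝ) • Q)) y x) *
      Real.log ((∑ y, ν y * (NormedSpace.exp ((0 : ℝ) • Q)) y x) / μ x))
      = ∑ y, ν y * Real.log (ν y / μ y) := by
    have hexp0 : NormedSpace.exp ((0 : ℝ) • Q) = (1 : Matrix E E ℝ) := by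
      rw [zero_smul]
      exact NormedSpace.exp_zero
    rw [hexp0]
    apply Finset.sum_congr rfl
    intro x _
    have : (∑ y, ν y * (1 : Matrix E E ℝ) y x) = ν x := by
      simp [Matrix.one_apply]
    rw [this]
  have heq : (∑ x, f x * Real.log (f x / μ x)) = ∑ y, ν y * Real.log (ν y / μ y) := by
    have := hconst 1 zero_le_one
    rw [h0] at this
    exact this
  -- now the strict Jensen argument
  by_contra hne
  -- the ratios are not all equal
  have hratio : ∃ j, ∃ k, ν j / μ j ≠ ν k / μ k := by
    by_contra hc
    push_neg at hc
    apply hne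
    obtain ⟨x₀⟩ := ‹Nonempty E›
    set c := ν x₀ / μ x₀ with hcdef
    have hall : ∀ y, ν y = c * μ y := by
      intro y
      have := hc y x₀
      rw [div_eq_iff (hμpos y).ne'] at this
      exact this
    have : (1:ℝ) = c := by
      calc (1:ℝ) = ∑ y, ν y := hνsum.symm
        _ = ∑ y, c * μ y := Finset.sum_congr rfl fun y _ => hall y
        _ = c * ∑ y, μ y := by rw [Finset.mul_sum]
        _ = c := by rw [hμsum, mul_one]
    funext y
    rw [hall y, ← this, one_mul]
  set φ : ℝ → ℝ := fun z => z * Real.log z with hφ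
  -- strict Jensen for each x
  have hjensen : ∀ x : E, φ (f x / μ x) < ∑ y, (μ y * P y x / μ x) * φ (ν y / μ y) := by
    intro x
    have hw : ∑ y, μ y * P y x / μ x = 1 := by
      rw [← Finset.sum_div, hμP x, div_self (hμpos x).ne']
    have hkey : f x / μ x = ∑ y, (μ y * P y x / μ x) • (ν y / μ y) := by
      rw [hf]
      rw [Finset.sum_div]
      apply Finset.sum_congr rfl
      intro y _
      have hμy := (hμpos y).ne'
      rw [smul_eq_mul]
      calc ν y * P y x / μ x = (ν y * P y x / μ x) * (μ y / μ y) := by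
            rw [div_self hμy, mul_one]
        _ = μ y * P y x / μ x * (ν y / μ y) := by ring
    rw [hkey]
    have := Real.strictConvexOn_mul_log.map_sum_lt
      (t := Finset.univ) (w := fun y => μ y * P y x / μ x) (p := fun y => ν y / μ y)
      (fun y _ => div_pos (mul_pos (hμpos y) (hPpos y x)) (hμpos x)) hw
      (fun y _ => Set.mem_Ici.2 (div_nonneg (hνnonneg y) (hμpos y).le))
      (by obtain ⟨j, k, hjk⟩ := hratio
          exact ⟨j, Finset.mem_univ j, k, Finset.mem_univ k, hjk⟩)
    simpa [smul_eq_mul] using this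
  -- sum over x
  have hlt : (∑ x, μ x * φ (f x / μ x)) <
      ∑ x, μ x * ∑ y, (μ y * P y x / μ x) * φ (ν y / μ y) := by
    apply Finset.sum_lt_sum_of_nonempty Finset.univ_nonempty
    intro x _
    exact mul_lt_mul_of_pos_left (hjensen x) (hμpos x)
  have hL : (∑ x, μ x * φ (f x / μ x)) = ∑ x, f x * Real.log (f x / μ x) := by
    apply Finset.sum_congr rfl
    intro x _
    rw [hφ]
    have := (hμpos x).ne'
    field_simp
  have hR : (∑ x, μ x * ∑ y, (μ y * P y x / μ x) * φ (ν y / μ y))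
      = ∑ y, ν y * Real.log (ν y / μ y) := by
    have step1 : ∀ x, μ x * ∑ y, (μ y * P y x / μ x) * φ (ν y / μ y)
        = ∑ y, μ y * P y x * φ (ν y / μ y) := by
      intro x
      rw [Finset.mul_sum]
      apply Finset.sum_congr rfl
      intro y _
      have := (hμpos x).ne'
      field_simp
    calc (∑ x, μ x * ∑ y, (μ y * P y x / μ x) * φ (ν y / μ y))
        = ∑ x, ∑ y, μ y * P y x * φ (ν y / μ y) :=
          Finset.sum_congr rfl fun x _ => step1 x
      _ = ∑ y, ∑ x, μ y * P y x * φ (ν y / μ y) := Finset.sum_comm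
      _ = ∑ y, μ y * φ (ν y / μ y) := by
          apply Finset.sum_congr rfl
          intro y _
          rw [← Finset.sum_mul, ← Finset.mul_sum, hProw y, mul_one]
      _ = ∑ y, ν y * Real.log (ν y / μ y) := by
          apply Finset.sum_congr rfl
          intro y _
          rw [hφ]
          rcases eq_or_ne (ν y) 0 with h | h
          · simp [h]
          · have := (hμpos y).ne'
            field_simp
  rw [hL, hR] at hlt
  exact absurd heq (ne_of_lt hlt)
end
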